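/- Let μ be a measure on a measurable space X, let p = 2m be a positive even integer, and let j be an integer with 0 ≤ j ≤ p. For every ξ ∈ L^p(μ; ℝ), the j-th iterated Fréchet derivative of the functional N : L^p(μ; ℝ) → ℝ, N(ξ) = ∫_X ξ(x)^p dμ(x), at the point ξ is the bounded symmetric j-linear map (η₁, …, η_j) ↦ (p!/(p−j)!) · ∫_X ξ(x)^{p−j} η₁(x) ⋯ η_j(x) dμ(x). -/

import Mathlib

open MeasureTheory
open scoped ENNReal

section Aux
open Finset

variable {X : Type*} [MeasurableSpace X] {μ : Measure X}

/-- Generalized Hölder: product of `p` functions in `L^p`. -/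
lemma holder_prod {p : ℕ} (hp0 : p ≠ 0) (f : Fin p → X → ℝ)
    (hf : ∀ i, AEMeasurable (f i) μ) :
    ∫⁻ x, ∏ i, ‖f i x‖₊ ∂μ ≤ ∏ i, eLpNorm (f i) p μ := by
  have hple : ∀ i : Fin p, eLpNorm (f i) p μ =
      (∫⁻ x, (‖f i x‖₊ : ℝ≥0∞) ^ (p : ℝ) ∂μ) ^ (1 / (p : ℝ)) := by
    intro i
    rw [eLpNorm_eq_lintegral_rpow_enorm_toReal (by exact_mod_cast hp0) (by simp)]
    simp [enorm_eq_nnnorm]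
  have key := ENNReal.lintegral_prod_norm_pow_le (μ := μ) Finset.univ
    (f := fun i x => (‖f i x‖₊ : ℝ≥0∞) ^ (p : ℝ))
    (fun i _ => ((hf i).nnnorm.coe_nnreal_ennreal).pow_const _)
    (p := fun _ : Fin p => 1 / (p : ℝ))
    (by rw [Finset.sum_const, Finset.card_univ, Fintype.card_fin, nsmul_eq_mul]; exact mul_one_div_cancel (by exact_mod_cast hp0)) (fun i _ => by positivity)
  have hpne : (p : ℝ) ≠ 0 := by exact_mod_cast hp0
  calc ∫⁻ x, ∏ i, (‖f i x‖₊ : ℝ≥0∞) ∂μ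
      = ∫⁻ x, ∏ i, ((‖f i x‖₊ : ℝ≥0∞) ^ (p : ℝ)) ^ (1 / (p : ℝ)) ∂μ := by
        congr 1; ext x; congr 1; ext i
        rw [← ENNReal.rpow_mul, mul_one_div, div_self hpne, ENNReal.rpow_one]
    _ ≤ ∏ i, (∫⁻ x, (‖f i x‖₊ : ℝ≥0∞) ^ (p : ℝ) ∂μ) ^ (1 / (p : ℝ)) := key
    _ = ∏ i, eLpNorm (f i) p μ := by simp_rw [hple]

lemma integrable_prod_lp {p : ℕ} (hp0 : p ≠ 0) [Fact (1 ≤ (p : ℝ≥0∞))]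
    (g : Fin p → Lp ℝ p μ) :
    Integrable (fun x => ∏ i, (g i : X → ℝ) x) μ := by
  have hmem : ∀ i, MemLp (g i : X → ℝ) p μ := fun i => Lp.memLp (g i)
  refine ⟨Finset.aestronglyMeasurable_fun_prod _ fun i _ => (hmem i).1, ?_⟩
  rw [HasFiniteIntegral]
  calc ∫⁻ x, (‖∏ i, (g i : X → ℝ) x‖₊ : ℝ≥0∞) ∂μ
      = ∫⁻ x, ∏ i, (‖(g i : X → ℝ) x‖₊ : ℝ≥0∞) ∂μ := by
        congr 1; ext x
        rw [nnnorm_prod]; push_cast; rfl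
    _ ≤ ∏ i, eLpNorm (g i : X → ℝ) p μ :=
        holder_prod hp0 _ fun i => (hmem i).1.aemeasurable
    _ < ⊤ := ENNReal.prod_lt_top fun i _ => (hmem i).2

variable (μ) in
/-- The bounded `p`-linear map `(η₁,…,η_p) ↦ ∫ η₁ ⋯ η_p`. -/
noncomputable def prodCLM (p : ℕ) (hp0 : p ≠ 0) [Fact (1 ≤ (p : ℝ≥0∞))] :
    ContinuousMultilinearMap ℝ (fun _ : Fin p => Lp ℝ p μ) ℝ := by
  classical
  refine MultilinearMap.mkContinuous
    { toFun := fun g => ∫ x, ∏ i, (g i : X → ℝ) x ∂μ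
      map_update_add' := ?_
      map_update_smul' := ?_ } 1 ?_
  · intro _ g i a b
    have key : ∀ c : Lp ℝ p μ, (fun x => ∏ k, ((Function.update g i c k : X → ℝ) x))
        = fun x => (c : X → ℝ) x * ∏ k ∈ univ.erase i, (g k : X → ℝ) x := by
      intro c; ext x
      have : ∀ k, ((Function.update g i c k : X → ℝ) x)
          = Function.update (fun k => (g k : X → ℝ) x) i ((c : X → ℝ) x) k := by
        intro k
        exact Function.apply_update (fun k (y : Lp ℝ p μ) => (y : X → ℝ) x) g i c k
      simp_rw [this]
      rw [Finset.prod_update_of_mem (mem_univ i)]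
      rw [Finset.sdiff_singleton_eq_erase]
    simp only [key]
    have hab : (((a + b : Lp ℝ p μ)) : X → ℝ) =ᵐ[μ] (a : X → ℝ) + (b : X → ℝ) := Lp.coeFn_add a b
    have hia : Integrable (fun x => (a : X → ℝ) x * ∏ k ∈ univ.erase i, (g k : X → ℝ) x) μ := by
      have := integrable_prod_lp hp0 (Function.update g i a)
      simpa only [key] using this
    have hib : Integrable (fun x => (b : X → ℝ) x * ∏ k ∈ univ.erase i, (g k : X → ℝ) x) μ := by
      have := integrable_prod_lp hp0 (Function.update g i b)
      simpa only [key] using this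
    rw [← integral_add hia hib]
    refine integral_congr_ae ?_
    filter_upwards [hab] with x hx
    simp only [hx, Pi.add_apply, add_mul]
  · intro _ g i c a
    have key : ∀ c : Lp ℝ p μ, (fun x => ∏ k, ((Function.update g i c k : X → ℝ) x))
        = fun x => (c : X → ℝ) x * ∏ k ∈ univ.erase i, (g k : X → ℝ) x := by
      intro c; ext x
      have : ∀ k, ((Function.update g i c k : X → ℝ) x)
          = Function.update (fun k => (g k : X → ℝ) x) i ((c : X → ℝ) x) k := by
        intro k
        exact Function.apply_update (fun k (y : Lp ℝ p μ) => (y : X → ℝ) x) g i c k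
      simp_rw [this]
      rw [Finset.prod_update_of_mem (mem_univ i)]
      rw [Finset.sdiff_singleton_eq_erase]
    simp only [key]
    have hca : ((c • a : Lp ℝ p μ) : X → ℝ) =ᵐ[μ] c • (a : X → ℝ) := Lp.coeFn_smul c a
    rw [← integral_smul]
    refine integral_congr_ae ?_
    filter_upwards [hca] with x hx
    simp only [hx, Pi.smul_apply, smul_eq_mul, mul_assoc]
  · intro g
    have hint := integrable_prod_lp hp0 g
    calc ‖∫ x, ∏ i, (g i : X → ℝ) x ∂μ‖
        ≤ ∫ x, ‖∏ i, (g i : X → ℝ) x‖ ∂μ := norm_integral_le_integral_norm _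
      _ = (∫⁻ x, (‖∏ i, (g i : X → ℝ) x‖₊ : ℝ≥0∞) ∂μ).toReal := by
          rw [integral_norm_eq_lintegral_enorm hint.1]; rfl
      _ ≤ (∏ i, eLpNorm (g i : X → ℝ) p μ).toReal := by
          apply ENNReal.toReal_mono (ENNReal.prod_lt_top fun i _ => (Lp.memLp (g i)).2).ne
          calc ∫⁻ x, (‖∏ i, (g i : X → ℝ) x‖₊ : ℝ≥0∞) ∂μ
              = ∫⁻ x, ∏ i, (‖(g i : X → ℝ) x‖₊ : ℝ≥0∞) ∂μ := by
                congr 1; ext x; rw [nnnorm_prod]; push_cast; rfl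
            _ ≤ _ := holder_prod hp0 _ fun i => (Lp.memLp (g i)).1.aemeasurable
      _ = ∏ i, ‖g i‖ := by
          rw [ENNReal.toReal_prod]; exact Finset.prod_congr rfl fun i _ => (Lp.norm_def _).symm
      _ = 1 * ∏ i, ‖g i‖ := (one_mul _).symm

lemma prodCLM_apply (p : ℕ) (hp0 : p ≠ 0) [Fact (1 ≤ (p : ℝ≥0∞))] (g : Fin p → Lp ℝ p μ) :
    prodCLM μ p hp0 g = ∫ x, ∏ i, (g i : X → ℝ) x ∂μ := rfl

end Aux

open Finset in
/-- For a positive even integer `p = 2m` and `0 ≤ j ≤ p`, the functional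
`N(ξ) = ∫ ξ^p dμ` on `L^p(μ; ℝ)` is `j` times continuously differentiable, and its `j`-th
iterated Fréchet derivative at `ξ` is the bounded symmetric `j`-linear map
`(η₁, …, η_j) ↦ (p!/(p−j)!) · ∫ ξ^{p−j} η₁ ⋯ η_j dμ`. -/
theorem iteratedFDeriv_integral_pow {X : Type*} [MeasurableSpace X] (μ : Measure X)
    (m : ℕ) (hm : 0 < m) (p : ℕ) (hp : p = 2 * m) [Fact (1 ≤ (p : ℝ≥0∞))]
    (j : ℕ) (hj : j ≤ p) :
    ContDiff ℝ j (fun ξ : Lp ℝ p μ => ∫ x, (ξ : X → ℝ) x ^ p ∂μ) ∧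
      ∀ (ξ : Lp ℝ p μ) (η : Fin j → Lp ℝ p μ),
        iteratedFDeriv ℝ j (fun ζ : Lp ℝ p μ => ∫ x, (ζ : X → ℝ) x ^ p ∂μ) ξ η =
          ((p.factorial : ℝ) / ((p - j).factorial : ℝ)) *
            ∫ x, (ξ : X → ℝ) x ^ (p - j) * ∏ i, (η i : X → ℝ) x ∂μ := by
  classical
  have hp0 : p ≠ 0 := by omega
  set M := prodCLM μ p hp0 with hM
  let diag : Lp ℝ p μ →L[ℝ] (Fin p → Lp ℝ p μ) :=
    ContinuousLinearMap.pi fun _ => ContinuousLinearMap.id ℝ _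
  have hN : (fun ξ : Lp ℝ p μ => ∫ x, (ξ : X → ℝ) x ^ p ∂μ) = ⇑M ∘ ⇑diag := by
    funext ξ
    show _ = M (diag ξ)
    rw [prodCLM_apply]
    congr 1; funext x
    have : ∀ i : Fin p, ((diag ξ i : Lp ℝ p μ) : X → ℝ) x = (ξ : X → ℝ) x := fun i => rfl
    simp_rw [this]
    simp
  constructor
  · rw [hN]; exact (M.contDiff).comp diag.contDiff
  · intro ξ η
    rw [hN]
    rw [ContinuousLinearMap.iteratedFDeriv_comp_right diag (M.contDiff (n := (⊤ : WithTop ℕ∞))) ξ le_top]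
    rw [ContinuousMultilinearMap.compContinuousLinearMap_apply]
    rw [M.iteratedFDeriv_eq]
    rw [ContinuousMultilinearMap.iteratedFDeriv]
    rw [ContinuousMultilinearMap.sum_apply]
    have hterm : ∀ (instE : DecidableEq (Fin p)) (e : Fin j ↪ Fin p)
        (instP : DecidablePred (fun x => x ∈ Set.range ⇑e)),
        (@ContinuousMultilinearMap.iteratedFDerivComponent ℝ (Fin p) (fun _ => Lp ℝ p μ) ℝ
            _ _ _ _ _ _ (Fin j) _ M _ (@Function.Embedding.toEquivRange _ _ _ instE e) instP
            (Pi.compRightL ℝ _ Subtype.val (diag ξ))) (fun i => diag (η i)) =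
          ∫ x, (ξ : X → ℝ) x ^ (p - j) * ∏ i, (η i : X → ℝ) x ∂μ := by
      intro instE e instP
      rw [ContinuousMultilinearMap.iteratedFDerivComponent_apply]
      rw [hM, prodCLM_apply]
      refine integral_congr_ae (Filter.Eventually.of_forall fun x => ?_)
      dsimp only
      have himg : Finset.univ.filter (· ∈ Set.range ⇑e) = Finset.univ.image ⇑e := by
        ext idx; simp
      have hcard : (Finset.univ.filter (¬ · ∈ Set.range ⇑e)).card = p - j := by
        rw [Finset.filter_not, Finset.card_sdiff_of_subset (Finset.filter_subset _ _), himg,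
          Finset.card_image_of_injective _ e.injective]
        simp
      rw [← Finset.prod_filter_mul_prod_filter_not Finset.univ (· ∈ Set.range ⇑e), mul_comm]
      congr 1
      · trans ∏ _idx ∈ Finset.univ.filter (¬ · ∈ Set.range ⇑e), (ξ : X → ℝ) x
        · exact Finset.prod_congr rfl fun idx hidx => by
            rw [dif_neg (by simpa using hidx)]; rfl
        · rw [Finset.prod_const, hcard]
      · rw [himg, Finset.prod_image (fun a _ b _ h => e.injective h)]
        refine Finset.prod_congr rfl fun i _ => ?_
        rw [dif_pos ⟨i, rfl⟩]
        simp only [Function.Embedding.toEquivRange_symm_apply_self]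
        rfl
    trans (∑ _e : Fin j ↪ Fin p, ∫ x, (ξ : X → ℝ) x ^ (p - j) * ∏ i, (η i : X → ℝ) x ∂μ)
    · exact Finset.sum_congr rfl fun e _ => hterm _ e _
    rw [Finset.sum_const, Finset.card_univ, Fintype.card_embedding_eq, Fintype.card_fin,
      Fintype.card_fin, nsmul_eq_mul]
    congr 1
    rw [eq_div_iff (by exact_mod_cast (Nat.factorial_pos (p - j)).ne')]
    rw [mul_comm]
    exact_mod_cast Nat.factorial_mul_descFactorial hj
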